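/- arXiv:2509.10062 — 4 statements merged into one kernel-verified Lean document; each statement's English description precedes it below -/
import Mathlib

section
/- Let r be a positive integer and let G be a finite nonempty simple graph with r-splitter rank k. Then for every vertex c of G (Connector move), the number of vertices s of G[N_r[c]] that are r-progressing against c is at most (2r+1)^(2^(k-1)-1). -/
open Classical

/-- The closed `r`-neighborhood of `c` inside the induced subgraph `G[A]`:
all vertices of `A` joined to `c` by a walk of length at most `r` staying in `A`. -/
noncomputable def ball {V : Type*} (G : SimpleGraph V) (r : ℕ) (A : Finset V) (c : V) :
    Finset V :=
  A.filter (fun v => ∃ p : G.Walk c v, p.length ≤ r ∧ ∀ x ∈ p.support, x ∈ A)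

/-- The `r`-splitter rank of the induced subgraph `G[A]` (with `rank ∅ = 0`). -/
noncomputable def splitterRank {V : Type*} [DecidableEq V] (G : SimpleGraph V) (r : ℕ)
    (A : Finset V) : ℕ :=
  if _ : A.Nonempty then
    1 + A.attach.sup (fun c =>
      (ball G r A c.1).attach.inf'
        (Finset.attach_nonempty_iff.2 ⟨c.1, Finset.mem_filter.2 ⟨c.2,
          SimpleGraph.Walk.nil, by simp, by simp [c.2]⟩⟩)
        (fun s => splitterRank G r ((ball G r A c.1).erase s.1)))
  else 0
termination_by A.card
decreasing_by
  exact lt_of_lt_of_le (Finset.card_erase_lt_of_mem s.2)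
    (Finset.card_le_card (Finset.filter_subset _ _))


set_option linter.unusedSectionVars false

namespace SplitAux

variable {V : Type*} [DecidableEq V] {G : SimpleGraph V} {r n : ℕ} {A B : Finset V} {c v w x : V}

lemma ball_subset : ball G r A c ⊆ A := Finset.filter_subset _ _

lemma mem_ball_self (hc : c ∈ A) : c ∈ ball G r A c :=
  Finset.mem_filter.2 ⟨hc, SimpleGraph.Walk.nil, by simp, by simp [hc]⟩

lemma mem_ball_of_walk (p : G.Walk c v) (hl : p.length ≤ r) (hs : ∀ x ∈ p.support, x ∈ A) :
    v ∈ ball G r A c :=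
  Finset.mem_filter.2 ⟨hs v p.end_mem_support, p, hl, hs⟩

lemma exists_walk_of_mem_ball (h : v ∈ ball G r A c) :
    ∃ p : G.Walk c v, p.length ≤ r ∧ ∀ x ∈ p.support, x ∈ A :=
  (Finset.mem_filter.1 h).2

lemma ball_mono (hAB : A ⊆ B) : ball G r A c ⊆ ball G r B c := by
  intro v hv
  obtain ⟨p, hl, hs⟩ := exists_walk_of_mem_ball hv
  exact mem_ball_of_walk p hl (fun x hx => hAB (hs x hx))

lemma ball_erase (hx : x ∉ ball G r A c) : ball G r (A.erase x) c = ball G r A c := by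
  apply Finset.Subset.antisymm (ball_mono (A.erase_subset x))
  intro w hw
  obtain ⟨p, hl, hs⟩ := exists_walk_of_mem_ball hw
  have hxs : ∀ u ∈ p.support, u ≠ x := by
    intro u hu hne
    subst hne
    exact hx (mem_ball_of_walk (p.takeUntil u hu)
      (le_trans (SimpleGraph.Walk.length_takeUntil_le p hu) hl)
      (fun z hz => hs z (SimpleGraph.Walk.support_takeUntil_subset p hu hz)))
  exact mem_ball_of_walk p hl
    (fun z hz => Finset.mem_erase.2 ⟨hxs z hz, hs z hz⟩)

lemma rank_empty : splitterRank G r (∅ : Finset V) = 0 := by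
  rw [splitterRank]; simp

lemma rank_eq (h : A.Nonempty) : splitterRank G r A =
    1 + A.attach.sup (fun c =>
      (ball G r A c.1).attach.inf'
        (Finset.attach_nonempty_iff.2 ⟨c.1, mem_ball_self c.2⟩)
        (fun s => splitterRank G r ((ball G r A c.1).erase s.1))) := by
  rw [splitterRank]
  exact dif_pos h

lemma rank_pos (h : A.Nonempty) : 1 ≤ splitterRank G r A := by
  rw [rank_eq h]; omega

lemma nonempty_of_rank (h : 1 ≤ splitterRank G r A) : A.Nonempty := by
  rcases A.eq_empty_or_nonempty with rfl | h'
  · rw [rank_empty] at h; omega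
  · exact h'

lemma le_rank (hc : c ∈ A)
    (H : ∀ s ∈ ball G r A c, n ≤ splitterRank G r ((ball G r A c).erase s)) :
    n + 1 ≤ splitterRank G r A := by
  rw [rank_eq ⟨c, hc⟩]
  have h2 := Finset.le_sup (f := (fun c' : {y // y ∈ A} =>
      (ball G r A c'.1).attach.inf'
        (Finset.attach_nonempty_iff.2 ⟨c'.1, mem_ball_self c'.2⟩)
        (fun s => splitterRank G r ((ball G r A c'.1).erase s.1))))
    (Finset.mem_attach A ⟨c, hc⟩)
  have h2b : ((ball G r A c).attach.inf'
      (Finset.attach_nonempty_iff.2 ⟨c, mem_ball_self hc⟩)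
      (fun s => splitterRank G r ((ball G r A c).erase s.1))) ≤
      A.attach.sup (fun c' =>
      (ball G r A c'.1).attach.inf'
        (Finset.attach_nonempty_iff.2 ⟨c'.1, mem_ball_self c'.2⟩)
        (fun s => splitterRank G r ((ball G r A c'.1).erase s.1))) := h2
  have h1 : n ≤ (ball G r A c).attach.inf'
      (Finset.attach_nonempty_iff.2 ⟨c, mem_ball_self hc⟩)
      (fun s => splitterRank G r ((ball G r A c).erase s.1)) :=
    Finset.le_inf' _ _ (fun b _ => H b.1 b.2)
  omega

lemma exists_min (hc : c ∈ A) :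
    ∃ s ∈ ball G r A c, splitterRank G r ((ball G r A c).erase s) + 1 ≤ splitterRank G r A := by
  have h2 := Finset.le_sup (f := (fun c' : {y // y ∈ A} =>
      (ball G r A c'.1).attach.inf'
        (Finset.attach_nonempty_iff.2 ⟨c'.1, mem_ball_self c'.2⟩)
        (fun s => splitterRank G r ((ball G r A c'.1).erase s.1))))
    (Finset.mem_attach A ⟨c, hc⟩)
  obtain ⟨s, _, hs⟩ := Finset.exists_mem_eq_inf'
    (Finset.attach_nonempty_iff.2 ⟨c, mem_ball_self hc⟩)
    (fun s : {y // y ∈ ball G r A c} => splitterRank G r ((ball G r A c).erase s.1))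
  refine ⟨s.1, s.2, ?_⟩
  rw [rank_eq ⟨c, hc⟩]
  have h2b : ((ball G r A c).attach.inf'
      (Finset.attach_nonempty_iff.2 ⟨c, mem_ball_self hc⟩)
      (fun s' => splitterRank G r ((ball G r A c).erase s'.1))) ≤
      A.attach.sup (fun c' =>
      (ball G r A c'.1).attach.inf'
        (Finset.attach_nonempty_iff.2 ⟨c'.1, mem_ball_self c'.2⟩)
        (fun s' => splitterRank G r ((ball G r A c'.1).erase s'.1))) := h2
  have hsb : splitterRank G r ((ball G r A c).erase s.1) =
      (ball G r A c).attach.inf'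
      (Finset.attach_nonempty_iff.2 ⟨c, mem_ball_self hc⟩)
      (fun s' => splitterRank G r ((ball G r A c).erase s'.1)) := hs.symm
  omega

lemma exists_critical (h : A.Nonempty) :
    ∃ c ∈ A, ∀ s ∈ ball G r A c,
      splitterRank G r A ≤ splitterRank G r ((ball G r A c).erase s) + 1 := by
  obtain ⟨c, _, hc⟩ := Finset.exists_mem_eq_sup A.attach
    (Finset.attach_nonempty_iff.2 h)
    (fun c' : {y // y ∈ A} =>
      (ball G r A c'.1).attach.inf'
        (Finset.attach_nonempty_iff.2 ⟨c'.1, mem_ball_self c'.2⟩)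
        (fun s => splitterRank G r ((ball G r A c'.1).erase s.1)))
  refine ⟨c.1, c.2, fun s hs => ?_⟩
  have h3 : ((ball G r A c.1).attach.inf'
      (Finset.attach_nonempty_iff.2 ⟨c.1, mem_ball_self c.2⟩)
      (fun s' => splitterRank G r ((ball G r A c.1).erase s'.1))) ≤
      splitterRank G r ((ball G r A c.1).erase s) :=
    Finset.inf'_le (b := (⟨s, hs⟩ : {y // y ∈ ball G r A c.1}))
    (fun s' : {y // y ∈ ball G r A c.1} => splitterRank G r ((ball G r A c.1).erase s'.1))
    (Finset.mem_attach _ _)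
  rw [rank_eq h, hc]
  omega


lemma exists_adj_of_walk {c w : V} (p : G.Walk c w) (hne : w ≠ c) :
    ∃ b, G.Adj c b ∧ b ∈ p.support := by
  cases p with
  | nil => exact absurd rfl hne
  | cons hadj q =>
    rename_i b
    exact ⟨b, hadj, by
      rw [SimpleGraph.Walk.support_cons]
      exact List.mem_cons_of_mem _ q.start_mem_support⟩

lemma rank_le (h : A.Nonempty)
    (H : ∀ c ∈ A, ∃ s ∈ ball G r A c,
      splitterRank G r ((ball G r A c).erase s) + 1 ≤ n) :
    splitterRank G r A ≤ n := by
  obtain ⟨c0, hc0⟩ := h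
  obtain ⟨s0, _, hs0⟩ := H c0 hc0
  have hn : 1 ≤ n := by omega
  rw [rank_eq ⟨c0, hc0⟩]
  have hsup : ∀ c ∈ A.attach,
      ((ball G r A c.1).attach.inf'
        (Finset.attach_nonempty_iff.2 ⟨c.1, mem_ball_self c.2⟩)
        (fun s => splitterRank G r ((ball G r A c.1).erase s.1))) ≤ n - 1 := by
    intro c _
    obtain ⟨s, hs, hsle⟩ := H c.1 c.2
    have h4 : ((ball G r A c.1).attach.inf'
        (Finset.attach_nonempty_iff.2 ⟨c.1, mem_ball_self c.2⟩)
        (fun s' => splitterRank G r ((ball G r A c.1).erase s'.1))) ≤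
        splitterRank G r ((ball G r A c.1).erase s) :=
      Finset.inf'_le _ (Finset.mem_attach _ (⟨s, hs⟩ : {y // y ∈ ball G r A c.1}))
    omega
  have := Finset.sup_le hsup
  omega

lemma rank_mono : ∀ (n : ℕ) (B A : Finset V), B.card ≤ n → A ⊆ B →
    splitterRank G r A ≤ splitterRank G r B := by
  intro n
  induction n with
  | zero =>
    intro B A hB hAB
    have : B = ∅ := Finset.card_eq_zero.1 (Nat.le_zero.1 hB)
    subst this
    rw [Finset.subset_empty.1 hAB]
  | succ n IH =>
    intro B A hB hAB
    rcases A.eq_empty_or_nonempty with rfl | hA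
    · rw [rank_empty]; omega
    have hBne : B.Nonempty := hA.mono hAB
    apply rank_le hA
    intro c hc
    obtain ⟨sstar, hsstar, hsle⟩ := exists_min (hAB hc)
    have hcard : ((ball G r B c).erase sstar).card ≤ n := by
      have h1 : ((ball G r B c).erase sstar).card < (ball G r B c).card :=
        Finset.card_erase_lt_of_mem hsstar
      have h2 : (ball G r B c).card ≤ B.card := Finset.card_le_card ball_subset
      omega
    by_cases hmem : sstar ∈ ball G r A c
    · refine ⟨sstar, hmem, ?_⟩
      have := IH ((ball G r B c).erase sstar) ((ball G r A c).erase sstar) hcard (by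
        intro z hz
        have hz' := Finset.mem_erase.1 hz
        exact Finset.mem_erase.2 ⟨hz'.1, ball_mono hAB hz'.2⟩)
      omega
    · refine ⟨c, mem_ball_self hc, ?_⟩
      have := IH ((ball G r B c).erase sstar) ((ball G r A c).erase c) hcard (by
        intro z hz
        have hz' := Finset.mem_erase.1 hz
        refine Finset.mem_erase.2 ⟨?_, ball_mono hAB hz'.2⟩
        intro hzz
        exact hmem (hzz ▸ hz'.2))
      omega

lemma rank_mono' (hAB : A ⊆ B) : splitterRank G r A ≤ splitterRank G r B :=
  rank_mono B.card B A le_rfl hAB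

/-- Deleting one vertex decreases the rank by at most one. -/
lemma rank_le_erase_succ (v : V) :
    splitterRank G r A ≤ splitterRank G r (A.erase v) + 1 := by
  rcases A.eq_empty_or_nonempty with rfl | hA
  · rw [rank_empty]; omega
  by_cases hv : v ∈ A
  swap
  · rw [Finset.erase_eq_of_notMem hv]; omega
  obtain ⟨cs, hcs, hcrit⟩ := exists_critical hA
  by_cases hvb : v ∈ ball G r A cs
  · have h1 := hcrit v hvb
    have h2 : splitterRank G r ((ball G r A cs).erase v) ≤ splitterRank G r (A.erase v) :=
      rank_mono' (by
        intro z hz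
        have hz' := Finset.mem_erase.1 hz
        exact Finset.mem_erase.2 ⟨hz'.1, ball_subset hz'.2⟩)
    omega
  · have hcsv : cs ≠ v := fun h => hvb (h ▸ mem_ball_self hcs)
    have hcs' : cs ∈ A.erase v := Finset.mem_erase.2 ⟨hcsv, hcs⟩
    have hball : ball G r (A.erase v) cs = ball G r A cs := ball_erase hvb
    have h3 : (splitterRank G r A - 1) + 1 ≤ splitterRank G r (A.erase v) := by
      apply le_rank hcs'
      intro s hs
      rw [hball] at hs ⊢
      have := hcrit s hs
      omega
    have := rank_pos (G := G) (r := r) hA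
    omega

lemma adj_of_two_le_rank (h : 2 ≤ splitterRank G r A) :
    ∃ a ∈ A, ∃ b ∈ A, G.Adj a b := by
  have hA : A.Nonempty := nonempty_of_rank (le_trans (by norm_num : (1:ℕ) ≤ 2) h)
  by_contra hno
  push_neg at hno
  have : splitterRank G r A ≤ 1 := by
    apply rank_le hA
    intro c hc
    refine ⟨c, mem_ball_self hc, ?_⟩
    have hball : ball G r A c = {c} := by
      apply Finset.Subset.antisymm
      · intro w hw
        obtain ⟨p, hl, hs⟩ := exists_walk_of_mem_ball hw
        by_contra hwc
        have hwc' : w ≠ c := by simpa using hwc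
        obtain ⟨b, hadj, hbs⟩ := exists_adj_of_walk p hwc'
        exact (hno c hc b (hs b hbs)) hadj
      · intro w hw
        simp only [Finset.mem_singleton] at hw
        subst hw
        exact mem_ball_self hc
    rw [hball]
    simp only [Finset.erase_singleton]
    rw [rank_empty]
  omega

lemma two_le_rank_of_adj (hr : 0 < r) {a b : V} (ha : a ∈ A) (hb : b ∈ A) (hadj : G.Adj a b) :
    2 ≤ splitterRank G r A := by
  have hbball : b ∈ ball G r A a := by
    refine mem_ball_of_walk (SimpleGraph.Walk.cons hadj SimpleGraph.Walk.nil) (by simpa) ?_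
    intro x hx
    have hx' : x = a ∨ x = b := by
      simpa using hx
    rcases hx' with rfl | rfl
    · exact ha
    · exact hb
  have h11 : (1 : ℕ) + 1 ≤ splitterRank G r A := by
    apply le_rank ha
    intro s hs
    apply rank_pos
    have hcard : 2 ≤ (ball G r A a).card :=
      Finset.one_lt_card.2 ⟨a, mem_ball_self ha, b, hbball, (hadj.ne : a ≠ b)⟩
    have hc2 := Finset.card_erase_of_mem hs
    exact Finset.card_pos.1 (by omega)
  omega


/-- Reduce any finset to a "fully critical" subset with the same rank containing all
progressing vertices. -/
lemma exists_reduction : ∀ (n : ℕ) (B : Finset V), B.card ≤ n →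
    ∃ C ⊆ B, splitterRank G r C = splitterRank G r B ∧
      (∀ x ∈ C, splitterRank G r (C.erase x) < splitterRank G r C) ∧
      (∀ s ∈ B, splitterRank G r (B.erase s) < splitterRank G r B → s ∈ C) := by
  intro n
  induction n with
  | zero =>
    intro B hB
    exact ⟨B, le_rfl, rfl, by
      have : B = ∅ := Finset.card_eq_zero.1 (Nat.le_zero.1 hB)
      subst this
      simp, fun s hs _ => hs⟩
  | succ n IH =>
    intro B hB
    by_cases hcrit : ∀ x ∈ B, splitterRank G r (B.erase x) < splitterRank G r B
    · exact ⟨B, le_rfl, rfl, hcrit, fun s hs _ => hs⟩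
    · push_neg at hcrit
      obtain ⟨x, hx, hxr⟩ := hcrit
      have hxeq : splitterRank G r (B.erase x) = splitterRank G r B :=
        le_antisymm (rank_mono' (Finset.erase_subset x B)) hxr
      have hcard : (B.erase x).card ≤ n := by
        have := Finset.card_erase_of_mem hx
        have := Finset.card_pos.2 ⟨x, hx⟩
        omega
      obtain ⟨C, hCsub, hCrk, hCcrit, hCmem⟩ := IH (B.erase x) hcard
      refine ⟨C, le_trans hCsub (Finset.erase_subset x B), by rw [hCrk, hxeq], hCcrit, ?_⟩
      intro s hs hsr
      have hsx : s ≠ x := by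
        intro h
        subst h
        omega
      apply hCmem s (Finset.mem_erase.2 ⟨hsx, hs⟩)
      rw [hxeq]
      calc splitterRank G r ((B.erase x).erase s)
      _ ≤ splitterRank G r (B.erase s) := rank_mono' (by
          intro z hz
          have h1 := Finset.mem_erase.1 hz
          have h2 := Finset.mem_erase.1 h1.2
          exact Finset.mem_erase.2 ⟨h1.1, h2.2⟩)
      _ < splitterRank G r B := hsr

/-- Extract a minimal (hence fully critical) subset of any given rank `n ≤ rank B`. -/
lemma exists_minimal : ∀ (N : ℕ) (B : Finset V), B.card ≤ N → ∀ n, 1 ≤ n →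
    n ≤ splitterRank G r B →
    ∃ D ⊆ B, splitterRank G r D = n ∧
      (∀ x ∈ D, splitterRank G r (D.erase x) < n) := by
  intro N
  induction N with
  | zero =>
    intro B hB n hn hnr
    have : B = ∅ := Finset.card_eq_zero.1 (Nat.le_zero.1 hB)
    subst this
    rw [rank_empty] at hnr
    omega
  | succ N IH =>
    intro B hB n hn hnr
    by_cases hex : ∃ x ∈ B, n ≤ splitterRank G r (B.erase x)
    · obtain ⟨x, hx, hxr⟩ := hex
      have hcard : (B.erase x).card ≤ N := by
        have := Finset.card_erase_of_mem hx
        have := Finset.card_pos.2 ⟨x, hx⟩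
        omega
      obtain ⟨D, hD, h1, h2⟩ := IH (B.erase x) hcard n hn hxr
      exact ⟨D, le_trans hD (Finset.erase_subset x B), h1, h2⟩
    · push_neg at hex
      have hBne : B.Nonempty := nonempty_of_rank (le_trans hn hnr)
      obtain ⟨x, hx⟩ := hBne
      have hle : splitterRank G r B ≤ n := by
        have h1 := rank_le_erase_succ (G := G) (r := r) (A := B) x
        have h2 := hex x hx
        omega
      exact ⟨B, le_rfl, le_antisymm hle hnr, fun y hy => hex y hy⟩

theorem crit_bound (hr : 0 < r) : ∀ (m : ℕ), ∀ B : Finset V,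
    splitterRank G r B = m → (∀ x ∈ B, splitterRank G r (B.erase x) < m) →
    B.card ≤ (2*r+1) ^ (2^(m-1) - 1) := by
  intro m
  induction m using Nat.strong_induction_on with
  | _ m IH =>
  rcases m with _|_|_|n
  -- m = 0
  · intro B hrk hfc
    have : B = ∅ := by
      by_contra h
      have := rank_pos (G := G) (r := r) (Finset.nonempty_iff_ne_empty.2 h)
      omega
    subst this
    simp
  -- m = 1
  · intro B hrk hfc
    rcases B.eq_empty_or_nonempty with rfl | ⟨x, hx⟩
    · simp
    have h0 : splitterRank G r (B.erase x) = 0 := by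
      have := hfc x hx
      omega
    have hempty : B.erase x = ∅ := by
      by_contra h
      have := rank_pos (G := G) (r := r) (Finset.nonempty_iff_ne_empty.2 h)
      omega
    have hsub : B ⊆ {x} := by
      intro z hz
      by_contra hzx
      have hzx' : z ≠ x := by simpa using hzx
      have : z ∈ B.erase x := Finset.mem_erase.2 ⟨hzx', hz⟩
      rw [hempty] at this
      simp at this
    calc B.card ≤ ({x} : Finset V).card := Finset.card_le_card hsub
    _ = 1 := Finset.card_singleton x
    _ ≤ (2*r+1) ^ (2^(1-1) - 1) := by norm_num
  -- m = 2
  · intro B hrk hfc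
    obtain ⟨a, ha, b, hb, hadj⟩ := adj_of_two_le_rank (G := G) (r := r) (A := B) (by omega)
    have hsub : B ⊆ {a, b} := by
      intro s hs
      by_contra hsab
      simp only [Finset.mem_insert, Finset.mem_singleton, not_or] at hsab
      have ha' : a ∈ B.erase s := Finset.mem_erase.2 ⟨fun h => hsab.1 h.symm, ha⟩
      have hb' : b ∈ B.erase s := Finset.mem_erase.2 ⟨fun h => hsab.2 h.symm, hb⟩
      have := two_le_rank_of_adj hr ha' hb' hadj
      have := hfc s hs
      omega
    calc B.card ≤ ({a, b} : Finset V).card := Finset.card_le_card hsub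
    _ ≤ 2 := by simpa using Finset.card_insert_le a ({b} : Finset V)
    _ ≤ (2*r+1) ^ (2^(2-1) - 1) := by
        have : (2*r+1) ^ (2^(2-1) - 1) = 2*r+1 := by norm_num
        omega
  -- m = n + 3
  · intro B hrk hfc
    set M : ℕ := n + 3 with hM
    set m' : ℕ := n + 2 with hm'
    set f' : ℕ := (2*r+1) ^ (2^(m'-1) - 1) with hf'def
    have hIH : ∀ D : Finset V, splitterRank G r D = m' →
        (∀ x ∈ D, splitterRank G r (D.erase x) < m') → D.card ≤ f' :=
      fun D h1 h2 => IH m' (by omega) D h1 h2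
    have hBne : B.Nonempty := nonempty_of_rank (G := G) (r := r) (A := B) (by omega)
    have herase : ∀ x ∈ B, splitterRank G r (B.erase x) = m' := by
      intro x hx
      have h1 := hfc x hx
      have h2 := rank_le_erase_succ (G := G) (r := r) (A := B) x
      omega
    obtain ⟨cs, hcs, hcrit⟩ := exists_critical hBne
    rw [hrk] at hcrit
    -- every vertex of B is in the ball around the critical center
    have hball : ∀ d ∈ B, d ∈ ball G r B cs := by
      intro x hxB
      by_contra hxb
      have hcsx : cs ≠ x := fun h => hxb (h ▸ mem_ball_self hcs)
      have heq : ball G r (B.erase x) cs = ball G r B cs := ball_erase hxb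
      have hge : (M - 1) + 1 ≤ splitterRank G r (B.erase x) := by
        apply le_rank (Finset.mem_erase.2 ⟨hcsx, hcs⟩)
        intro s hs
        rw [heq] at hs ⊢
        have := hcrit s hs
        omega
      have := herase x hxB
      omega
    -- choose short walks
    have hwalk : ∀ d ∈ B, ∃ Lw : Finset V, Lw.card ≤ r + 1 ∧
        (∀ y, y ∉ Lw → d ∈ ball G r (B.erase y) cs) := by
      intro d hd
      obtain ⟨p, hl, hsupp⟩ := exists_walk_of_mem_ball (hball d hd)
      refine ⟨p.support.toFinset, ?_, ?_⟩
      · have h1 : p.support.length = p.length + 1 := SimpleGraph.Walk.length_support p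
        have h2 := p.support.toFinset_card_le
        omega
      · intro y hy
        apply mem_ball_of_walk p hl
        intro z hz
        exact Finset.mem_erase.2 ⟨fun h => hy (h ▸ List.mem_toFinset.2 hz), hsupp z hz⟩
    choose Lw hLcard hLball using hwalk
    -- minimal certificate inside B
    obtain ⟨D0, hD0sub, hD0rk, hD0crit⟩ :=
      exists_minimal (G := G) (r := r) B.card B le_rfl m' (by omega) (by omega)
    have hD0card : D0.card ≤ f' := hIH D0 hD0rk hD0crit
    -- certificates avoiding each x ∈ D0
    have hDxex : ∀ x ∈ D0, ∃ D ⊆ B.erase x, splitterRank G r D = m' ∧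
        (∀ z ∈ D, splitterRank G r (D.erase z) < m') := by
      intro x hx
      exact exists_minimal (G := G) (r := r) (B.erase x).card (B.erase x) le_rfl m'
        (by omega) (le_of_eq (herase x (hD0sub hx)).symm)
    choose Dx hDxsub hDxrk hDxcrit using hDxex
    have hDxcard : ∀ x (hx : x ∈ D0), (Dx x hx).card ≤ f' :=
      fun x hx => hIH _ (hDxrk x hx) (hDxcrit x hx)
    -- the cover
    set cover : Finset V := insert cs (D0.attach.biUnion (fun x =>
        Lw x.1 (hD0sub x.2) ∪ (Dx x.1 x.2).attach.biUnion
          (fun d => Lw d.1 (Finset.mem_of_mem_erase (hDxsub x.1 x.2 d.2))))) with hcover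
    have hcov : B ⊆ cover := by
      intro y hyB
      by_contra hy
      have hycs : y ≠ cs := by
        intro h
        exact hy (by rw [hcover]; exact h ▸ Finset.mem_insert_self _ _)
      have hyL1 : ∀ (x : V) (hx : x ∈ D0), y ∉ Lw x (hD0sub hx) := by
        intro x hx hmem
        apply hy
        rw [hcover]
        apply Finset.mem_insert_of_mem
        exact Finset.mem_biUnion.2 ⟨⟨x, hx⟩, Finset.mem_attach _ _,
          Finset.mem_union_left _ hmem⟩
      have hyL2 : ∀ (x : V) (hx : x ∈ D0) (d : V) (hd : d ∈ Dx x hx),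
          y ∉ Lw d (Finset.mem_of_mem_erase (hDxsub x hx hd)) := by
        intro x hx d hd hmem
        apply hy
        rw [hcover]
        apply Finset.mem_insert_of_mem
        refine Finset.mem_biUnion.2 ⟨⟨x, hx⟩, Finset.mem_attach _ _,
          Finset.mem_union_right _ ?_⟩
        exact Finset.mem_biUnion.2 ⟨⟨d, hd⟩, Finset.mem_attach _ _, hmem⟩
      have hge : (M - 1) + 1 ≤ splitterRank G r (B.erase y) := by
        apply le_rank (Finset.mem_erase.2 ⟨hycs.symm, hcs⟩)
        intro s hs
        by_cases hsD0 : s ∈ D0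
        · have hsub : Dx s hsD0 ⊆ (ball G r (B.erase y) cs).erase s := by
            intro d hd
            have hdBs : d ∈ B.erase s := hDxsub s hsD0 hd
            refine Finset.mem_erase.2 ⟨(Finset.mem_erase.1 hdBs).1, ?_⟩
            exact hLball d (Finset.mem_of_mem_erase hdBs) y (hyL2 s hsD0 d hd)
          have hmono := rank_mono' (G := G) (r := r) hsub
          rw [hDxrk s hsD0] at hmono
          omega
        · have hsub : D0 ⊆ (ball G r (B.erase y) cs).erase s := by
            intro d hd
            refine Finset.mem_erase.2 ⟨fun h => hsD0 (h ▸ hd), ?_⟩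
            exact hLball d (hD0sub hd) y (hyL1 d hd)
          have hmono := rank_mono' (G := G) (r := r) hsub
          rw [hD0rk] at hmono
          omega
      have := herase y hyB
      omega
    -- count
    have hcount : B.card ≤ 1 + f' * ((r+1) + f' * (r+1)) := by
      have h1 : B.card ≤ cover.card := Finset.card_le_card hcov
      have h2 : cover.card ≤ 1 + (D0.attach.biUnion (fun x =>
          Lw x.1 (hD0sub x.2) ∪ (Dx x.1 x.2).attach.biUnion
            (fun d => Lw d.1 (Finset.mem_of_mem_erase (hDxsub x.1 x.2 d.2))))).card := by
        rw [hcover]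
        have := Finset.card_insert_le cs (D0.attach.biUnion (fun x =>
          Lw x.1 (hD0sub x.2) ∪ (Dx x.1 x.2).attach.biUnion
            (fun d => Lw d.1 (Finset.mem_of_mem_erase (hDxsub x.1 x.2 d.2)))))
        omega
      have h3 : (D0.attach.biUnion (fun x =>
          Lw x.1 (hD0sub x.2) ∪ (Dx x.1 x.2).attach.biUnion
            (fun d => Lw d.1 (Finset.mem_of_mem_erase (hDxsub x.1 x.2 d.2))))).card ≤
          D0.attach.card * ((r+1) + f' * (r+1)) := by
        refine le_trans (Finset.card_biUnion_le) ?_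
        refine le_trans (Finset.sum_le_card_nsmul _ _ ((r+1) + f' * (r+1)) ?_) (by
          rw [smul_eq_mul])
        intro x _
        refine le_trans (Finset.card_union_le _ _) ?_
        have hL : (Lw x.1 (hD0sub x.2)).card ≤ r + 1 := hLcard _ _
        have hB2 : ((Dx x.1 x.2).attach.biUnion
            (fun d => Lw d.1 (Finset.mem_of_mem_erase (hDxsub x.1 x.2 d.2)))).card ≤
            f' * (r+1) := by
          refine le_trans (Finset.card_biUnion_le) ?_
          refine le_trans (Finset.sum_le_card_nsmul _ _ (r+1) ?_) ?_
          · intro d _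
            exact hLcard _ _
          · rw [smul_eq_mul, Finset.card_attach]
            exact Nat.mul_le_mul_right _ (hDxcard x.1 x.2)
        omega
      rw [Finset.card_attach] at h3
      have h4 : D0.card * ((r+1) + f' * (r+1)) ≤ f' * ((r+1) + f' * (r+1)) :=
        Nat.mul_le_mul_right _ hD0card
      omega
    -- arithmetic
    have hf'ge : 2*r+1 ≤ f' := by
      rw [hf'def]
      refine Nat.le_self_pow ?_ _
      have h5 : 2 ≤ 2^(m'-1) := by
        have : 1 ≤ m' - 1 := by omega
        calc 2 = 2^1 := by norm_num
        _ ≤ 2^(m'-1) := Nat.pow_le_pow_right (by norm_num) this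
      omega
    have hexp : (2*r+1) ^ (2^(M-1) - 1) = (2*r+1) * (f' * f') := by
      rw [hf'def, ← pow_add, ← pow_succ']
      congr 1
      have h6 : 2^(M-1) = 2 * 2^(m'-1) := by
        have : M - 1 = (m' - 1) + 1 := by omega
        rw [this, pow_succ]
        ring
      have h7 : 1 ≤ 2^(m'-1) := Nat.one_le_two_pow
      omega
    rw [hexp]
    -- final: 1 + f'*((r+1) + f'*(r+1)) ≤ (2r+1)*(f'*f')
    have key : 1 + f' * ((r+1) + f' * (r+1)) ≤ (2*r+1) * (f' * f') := by
      nlinarith [hf'ge, hr, sq_nonneg f']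
    omega

theorem progressing_general (hr : 0 < r) (B : Finset V) :
    (B.filter (fun s => splitterRank G r (B.erase s) < splitterRank G r B)).card ≤
      (2*r+1) ^ (2^(splitterRank G r B - 1) - 1) := by
  obtain ⟨C, hCsub, hCrk, hCcrit, hCmem⟩ :=
    exists_reduction (G := G) (r := r) B.card B le_rfl
  have h1 : B.filter (fun s => splitterRank G r (B.erase s) < splitterRank G r B) ⊆ C := by
    intro s hs
    have hs' := Finset.mem_filter.1 hs
    exact hCmem s hs'.1 hs'.2
  have h2 : C.card ≤ (2*r+1) ^ (2^(splitterRank G r C - 1) - 1) :=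
    crit_bound hr (splitterRank G r C) C rfl hCcrit
  rw [hCrk] at h2
  exact le_trans (Finset.card_le_card h1) h2

end SplitAux

/-- If `G` has `r`-splitter rank `k`, then for every Connector move `c` there are at most
`(2r+1)^(2^(k-1)-1)` vertices `s` of `G[N_r[c]]` that are `r`-progressing against `c`. -/
theorem progressing_moves_bound {V : Type*} [Fintype V] [DecidableEq V] [Nonempty V]
    (G : SimpleGraph V) (r k : ℕ) (hr : 0 < r)
    (hk : splitterRank G r Finset.univ = k) (c : V) :
    ((ball G r Finset.univ c).filter (fun s =>
        splitterRank G r ((ball G r Finset.univ c).erase s) <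
          splitterRank G r (ball G r Finset.univ c))).card
      ≤ (2 * r + 1) ^ (2 ^ (k - 1) - 1) := by
  set B : Finset V := ball G r Finset.univ c with hB
  have h1 := SplitAux.progressing_general (G := G) (r := r) hr B
  have hmk : splitterRank G r B ≤ k := by
    rw [← hk]
    exact SplitAux.rank_mono' (Finset.subset_univ B)
  refine le_trans h1 ?_
  apply Nat.pow_le_pow_right (by omega)
  have := Nat.pow_le_pow_right (show 1 ≤ 2 by norm_num)
    (Nat.sub_le_sub_right hmk 1)
  omega
end

section
/- Let r be a positive integer and let G be a finite nonempty simple graph with r-splitter rank k. Then there exists an induced subgraph H of G with at most (2r+1)^(2^(k-1)-1) vertices such that the r-splitter rank of H equals k. -/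
open Classical

set_option linter.unusedSectionVars false

section helpers
variable {V : Type*} [DecidableEq V] (G : SimpleGraph V) (r : ℕ)

lemma ball_subset (A : Finset V) (c : V) : ball G r A c ⊆ A := Finset.filter_subset _ _

lemma mem_ball_self {A : Finset V} {c : V} (hc : c ∈ A) : c ∈ ball G r A c :=
  Finset.mem_filter.2 ⟨hc, SimpleGraph.Walk.nil, by simp, by simp [hc]⟩

lemma ball_mono {A B : Finset V} (h : A ⊆ B) (c : V) : ball G r A c ⊆ ball G r B c := by
  intro v hv
  rw [ball, Finset.mem_filter] at hv ⊢
  obtain ⟨hvA, p, hp, hs⟩ := hv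
  exact ⟨h hvA, p, hp, fun x hx => h (hs x hx)⟩

lemma splitterRank_empty (A : Finset V) (h : ¬ A.Nonempty) : splitterRank G r A = 0 := by
  rw [splitterRank, dif_neg h]

lemma splitterRank_pos {A : Finset V} (h : A.Nonempty) : 1 ≤ splitterRank G r A := by
  rw [splitterRank, dif_pos h]; exact Nat.le_add_right 1 _

lemma nonempty_of_rank {A : Finset V} (h : 1 ≤ splitterRank G r A) : A.Nonempty := by
  by_contra hA
  rw [splitterRank_empty G r A hA] at h
  omega

lemma le_splitterRank_of {A : Finset V} {c : V} (hc : c ∈ A) (m : ℕ)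
    (hm : ∀ s ∈ ball G r A c, m ≤ splitterRank G r ((ball G r A c).erase s)) :
    1 + m ≤ splitterRank G r A := by
  rw [splitterRank, dif_pos ⟨c, hc⟩]
  have h1 : m ≤ (ball G r A c).attach.inf'
      (Finset.attach_nonempty_iff.2 ⟨c, Finset.mem_filter.2 ⟨hc,
        SimpleGraph.Walk.nil, by simp, by simp [hc]⟩⟩)
      (fun s => splitterRank G r ((ball G r A c).erase s.1)) :=
    Finset.le_inf' _ _ (fun s _ => hm s.1 s.2)
  have h2 := Finset.le_sup (f := fun c : {x // x ∈ A} =>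
      (ball G r A c.1).attach.inf'
        (Finset.attach_nonempty_iff.2 ⟨c.1, Finset.mem_filter.2 ⟨c.2,
          SimpleGraph.Walk.nil, by simp, by simp [c.2]⟩⟩)
        (fun s => splitterRank G r ((ball G r A c.1).erase s.1)))
      (Finset.mem_attach A ⟨c, hc⟩)
  have h3 := le_trans h1 h2
  omega

lemma exists_spec {A : Finset V} (h : A.Nonempty) :
    ∃ c ∈ A, ∃ m, splitterRank G r A = 1 + m ∧
      ∀ s ∈ ball G r A c, m ≤ splitterRank G r ((ball G r A c).erase s) := by
  rw [splitterRank, dif_pos h]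
  obtain ⟨c, _, hc⟩ := Finset.exists_mem_eq_sup A.attach (Finset.attach_nonempty_iff.2 h)
    (fun c : {x // x ∈ A} =>
      (ball G r A c.1).attach.inf'
        (Finset.attach_nonempty_iff.2 ⟨c.1, Finset.mem_filter.2 ⟨c.2,
          SimpleGraph.Walk.nil, by simp, by simp [c.2]⟩⟩)
        (fun s => splitterRank G r ((ball G r A c.1).erase s.1)))
  refine ⟨c.1, c.2, _, by rw [hc], ?_⟩
  intro s hs
  exact Finset.inf'_le (fun s : {x // x ∈ ball G r A c.1} =>
    splitterRank G r ((ball G r A c.1).erase s.1)) (Finset.mem_attach _ ⟨s, hs⟩)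

lemma splitterRank_mono_aux : ∀ (n : ℕ) (B A : Finset V), B.card ≤ n → A ⊆ B →
    splitterRank G r A ≤ splitterRank G r B := by
  intro n
  induction n with
  | zero =>
    intro B A hB hAB
    have : ¬ A.Nonempty := by
      intro ⟨a, ha⟩
      have := Finset.card_pos.2 ⟨a, hAB ha⟩
      omega
    rw [splitterRank_empty G r A this]
    exact Nat.zero_le _
  | succ n ih =>
    intro B A hB hAB
    by_cases hA : A.Nonempty
    · obtain ⟨c, hcA, m, hrank, hall⟩ := exists_spec G r hA
      rw [hrank]
      apply le_splitterRank_of G r (hAB hcA)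
      intro s hs
      have hcard : ((ball G r B c).erase s).card ≤ n := by
        have h1 := Finset.card_erase_of_mem hs
        have h2 := Finset.card_le_card (ball_subset G r B c)
        have h3 := Finset.card_pos.2 ⟨s, hs⟩
        omega
      by_cases hsA : s ∈ ball G r A c
      · exact le_trans (hall s hsA) (ih _ _ hcard
          (Finset.erase_subset_erase s (ball_mono G r hAB c)))
      · refine le_trans (hall c (mem_ball_self G r hcA)) (ih _ _ hcard ?_)
        intro x hx
        have hxA : x ∈ ball G r A c := (Finset.erase_subset _ _) hx
        exact Finset.mem_erase.2 ⟨fun h => hsA (h ▸ hxA), ball_mono G r hAB c hxA⟩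
    · rw [splitterRank_empty G r A hA]
      exact Nat.zero_le _

lemma splitterRank_mono {A B : Finset V} (h : A ⊆ B) :
    splitterRank G r A ≤ splitterRank G r B :=
  splitterRank_mono_aux G r B.card B A le_rfl h

end helpers

section main
variable {V : Type*} [DecidableEq V] (G : SimpleGraph V) (r : ℕ)

lemma main_lemma (hr : 0 < r) : ∀ (k : ℕ) (A : Finset V), 1 ≤ k → k ≤ splitterRank G r A →
    ∃ H, H ⊆ A ∧ H.Nonempty ∧ H.card ≤ (2 * r + 1) ^ (2 ^ (k - 1) - 1) ∧
      k ≤ splitterRank G r H := by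
  intro k
  induction k with
  | zero => intro A h; omega
  | succ k ih =>
    intro A _ hA
    have hAne : A.Nonempty := nonempty_of_rank G r (le_trans (by omega) hA)
    by_cases hk0 : k = 0
    · subst hk0
      obtain ⟨a, ha⟩ := hAne
      refine ⟨{a}, by simp [ha], Finset.singleton_nonempty a, by simp, ?_⟩
      exact splitterRank_pos G r (Finset.singleton_nonempty a)
    have hk1 : 1 ≤ k := by omega
    obtain ⟨c, hcA, m, hrank, hall⟩ := exists_spec G r hAne
    set B := ball G r A c with hB
    have hmk : k ≤ m := by omega
    have hball : ∀ s ∈ B, k ≤ splitterRank G r (B.erase s) :=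
      fun s hs => le_trans hmk (hall s hs)
    have hcB : c ∈ B := mem_ball_self G r hcA
    have hBrank : k ≤ splitterRank G r B :=
      le_trans (hball c hcB) (splitterRank_mono G r (Finset.erase_subset _ _))
    -- H0
    obtain ⟨H0, hH0B, hH0ne, hH0card, hH0rank⟩ := ih B hk1 hBrank
    -- g
    set f := (2 * r + 1) ^ (2 ^ (k - 1) - 1) with hf
    have hg : ∀ v ∈ B, ∃ Hv : Finset V, Hv ⊆ B.erase v ∧ Hv.card ≤ f ∧
        k ≤ splitterRank G r Hv := by
      intro v hv
      obtain ⟨Hv, h1, _, h3, h4⟩ := ih (B.erase v) hk1 (hball v hv)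
      exact ⟨Hv, h1, h3, h4⟩
    set g : V → Finset V := fun v => if h : v ∈ B then (hg v h).choose else ∅ with hgdef
    have hgspec : ∀ v ∈ B, g v ⊆ B.erase v ∧ (g v).card ≤ f ∧
        k ≤ splitterRank G r (g v) := by
      intro v hv
      simp only [hgdef, dif_pos hv]
      exact (hg v hv).choose_spec
    -- paths
    have hQex : ∀ w ∈ B, ∃ Q : Finset V, c ∈ Q ∧ Q ⊆ A ∧ Q.card ≤ r + 1 ∧
        ∀ H' : Finset V, Q ⊆ H' → w ∈ ball G r H' c := by
      intro w hw
      obtain ⟨hwA, p, hlen, hsupp⟩ := Finset.mem_filter.1 hw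
      refine ⟨p.support.toFinset, List.mem_toFinset.2 p.start_mem_support,
        fun x hx => hsupp x (List.mem_toFinset.1 hx), ?_, ?_⟩
      · calc p.support.toFinset.card ≤ p.support.length := p.support.toFinset_card_le
          _ = p.length + 1 := SimpleGraph.Walk.length_support p
          _ ≤ r + 1 := by omega
      · intro H' hQH'
        exact Finset.mem_filter.2 ⟨hQH' (List.mem_toFinset.2 p.end_mem_support),
          p, hlen, fun x hx => hQH' (List.mem_toFinset.2 hx)⟩
    set Q : V → Finset V := fun w => if h : w ∈ B then (hQex w h).choose else ∅ with hQdef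
    have hQspec : ∀ w ∈ B, c ∈ Q w ∧ Q w ⊆ A ∧ (Q w).card ≤ r + 1 ∧
        ∀ H' : Finset V, Q w ⊆ H' → w ∈ ball G r H' c := by
      intro w hw
      simp only [hQdef, dif_pos hw]
      exact (hQex w hw).choose_spec
    -- W and H
    set W : Finset V := H0 ∪ H0.biUnion g with hWdef
    have hWB : W ⊆ B := by
      intro x hx
      rcases Finset.mem_union.1 hx with h | h
      · exact hH0B h
      · obtain ⟨v, hv, hxv⟩ := Finset.mem_biUnion.1 h
        exact (Finset.erase_subset _ _) ((hgspec v (hH0B hv)).1 hxv)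
    set H : Finset V := insert c (W.biUnion (fun w => (Q w).erase c)) with hHdef
    have hQH : ∀ w ∈ W, Q w ⊆ H := by
      intro w hw x hx
      by_cases hxc : x = c
      · exact hxc ▸ Finset.mem_insert_self c _
      · exact Finset.mem_insert_of_mem
          (Finset.mem_biUnion.2 ⟨w, hw, Finset.mem_erase.2 ⟨hxc, hx⟩⟩)
    have hWball : ∀ w ∈ W, w ∈ ball G r H c :=
      fun w hw => (hQspec w (hWB hw)).2.2.2 H (hQH w hw)
    have hcH : c ∈ H := Finset.mem_insert_self c _
    have hHA : H ⊆ A := by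
      intro x hx
      rcases Finset.mem_insert.1 hx with h | h
      · exact h ▸ hcA
      · obtain ⟨w, hw, hxw⟩ := Finset.mem_biUnion.1 h
        exact (hQspec w (hWB hw)).2.1 ((Finset.erase_subset _ _) hxw)
    -- cards
    have hWcard : W.card ≤ f + f * f := by
      calc W.card ≤ H0.card + (H0.biUnion g).card := Finset.card_union_le _ _
        _ ≤ f + f * f := by
          gcongr
          calc (H0.biUnion g).card ≤ ∑ v ∈ H0, (g v).card := Finset.card_biUnion_le
            _ ≤ ∑ _v ∈ H0, f := Finset.sum_le_sum (fun v hv => (hgspec v (hH0B hv)).2.1)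
            _ = H0.card * f := by rw [Finset.sum_const, smul_eq_mul]
            _ ≤ f * f := by exact Nat.mul_le_mul_right f hH0card
    have hHcard : H.card ≤ 1 + W.card * r := by
      calc H.card ≤ (W.biUnion (fun w => (Q w).erase c)).card + 1 := Finset.card_insert_le _ _
        _ ≤ (∑ w ∈ W, ((Q w).erase c).card) + 1 := by gcongr; exact Finset.card_biUnion_le
        _ ≤ (∑ _w ∈ W, r) + 1 := by
            gcongr with w hw
            have h1 := Finset.card_erase_of_mem (hQspec w (hWB hw)).1
            have h2 := (hQspec w (hWB hw)).2.2.1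
            omega
        _ = W.card * r + 1 := by rw [Finset.sum_const, smul_eq_mul]
        _ = 1 + W.card * r := by omega
    -- rank bound
    have hHrank : 1 + k ≤ splitterRank G r H := by
      apply le_splitterRank_of G r hcH
      intro s hs
      by_cases hsH0 : s ∈ H0
      · have hsB : s ∈ B := hH0B hsH0
        have hsub : g s ⊆ (ball G r H c).erase s := by
          intro x hx
          have hxW : x ∈ W := Finset.mem_union.2 (Or.inr (Finset.mem_biUnion.2 ⟨s, hsH0, hx⟩))
          have hxne : x ≠ s := (Finset.mem_erase.1 ((hgspec s hsB).1 hx)).1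
          exact Finset.mem_erase.2 ⟨hxne, hWball x hxW⟩
        exact le_trans (hgspec s hsB).2.2 (splitterRank_mono G r hsub)
      · have hsub : H0 ⊆ (ball G r H c).erase s := by
          intro x hx
          refine Finset.mem_erase.2 ⟨fun h => hsH0 (h ▸ hx), ?_⟩
          exact hWball x (Finset.mem_union.2 (Or.inl hx))
        exact le_trans hH0rank (splitterRank_mono G r hsub)
    -- finish
    refine ⟨H, hHA, ⟨c, hcH⟩, ?_, by omega⟩
    have hf1 : 1 ≤ f := Nat.one_le_pow _ _ (by omega)
    have hexp : 2 ^ (k + 1 - 1) - 1 = 2 * (2 ^ (k - 1) - 1) + 1 := by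
      have h2 : 2 ^ k = 2 * 2 ^ (k - 1) := by
        conv_lhs => rw [← Nat.sub_add_cancel hk1]
        rw [pow_succ]
        ring
      have h3 : 1 ≤ 2 ^ (k - 1) := Nat.one_le_two_pow
      simp only [Nat.add_sub_cancel]
      omega
    calc H.card ≤ 1 + W.card * r := hHcard
      _ ≤ 1 + (f + f * f) * r := by gcongr
      _ ≤ (2 * r + 1) * (f * f) := by
          have h1 : f ≤ f * f := Nat.le_mul_of_pos_left f (by omega)
          have h2 : 1 ≤ f * f := by nlinarith
          nlinarith [Nat.mul_le_mul_left r h1]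
      _ = (2 * r + 1) ^ (2 ^ (k + 1 - 1) - 1) := by
          rw [hexp, pow_succ, pow_mul', hf, sq]
          ring
end main

/-- If `G` has `r`-splitter rank `k`, then `G` has an induced subgraph with at most
`(2r+1)^(2^(k-1)-1)` vertices whose `r`-splitter rank is also `k`. -/
theorem small_subgraph_same_rank {V : Type*} [Fintype V] [DecidableEq V] [Nonempty V]
    (G : SimpleGraph V) (r k : ℕ) (hr : 0 < r)
    (hk : splitterRank G r Finset.univ = k) :
    ∃ H : Finset V, H.Nonempty ∧ H.card ≤ (2 * r + 1) ^ (2 ^ (k - 1) - 1) ∧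
      splitterRank G r H = k := by
  have hk1 : 1 ≤ k := hk ▸ splitterRank_pos G r Finset.univ_nonempty
  obtain ⟨H, _, hne, hcard, hrank⟩ := main_lemma G r hr k Finset.univ hk1 (le_of_eq hk.symm)
  exact ⟨H, hne, hcard, le_antisymm (hk ▸ splitterRank_mono G r (Finset.subset_univ H)) hrank⟩
end

section
/- Let r and k be positive integers and let B be a finite nonempty simple graph with rk_r(B) = k+1 that is minimal with this property, i.e., every nonempty proper induced subgraph of B has r-splitter rank at most k. Then there exists a vertex c of B such that N_r[c] = V(B), i.e., every vertex of B is at distance at most r from c. -/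
open Classical

lemma self_mem_ball {V : Type*} (G : SimpleGraph V) (r : ℕ) (A : Finset V) (c : V)
    (hc : c ∈ A) : c ∈ ball G r A c :=
  Finset.mem_filter.2 ⟨hc, SimpleGraph.Walk.nil, by simp, by simp [hc]⟩

lemma ball_ball {V : Type*} [Fintype V] [DecidableEq V] (G : SimpleGraph V) (r : ℕ) (c : V) :
    ball G r (ball G r Finset.univ c) c = ball G r Finset.univ c := by
  apply Finset.Subset.antisymm (Finset.filter_subset _ _)
  intro v hv
  obtain ⟨-, p, hp, -⟩ := Finset.mem_filter.1 hv
  refine Finset.mem_filter.2 ⟨hv, p, hp, fun x hx => ?_⟩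
  exact Finset.mem_filter.2 ⟨Finset.mem_univ x, p.takeUntil x hx,
    le_trans (SimpleGraph.Walk.length_takeUntil_le p hx) hp, fun _ _ => Finset.mem_univ _⟩


/-- A minimal graph of `r`-splitter rank `k+1` has a central vertex `c` with
`N_r[c] = V(B)`. -/
theorem minimal_has_center {V : Type*} [Fintype V] [DecidableEq V] [Nonempty V]
    (G : SimpleGraph V) (r k : ℕ) (hr : 0 < r) (hk : 0 < k)
    (hrk : splitterRank G r Finset.univ = k + 1)
    (hmin : ∀ A : Finset V, A.Nonempty → A ⊂ Finset.univ → splitterRank G r A ≤ k) :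
    ∃ c : V, ball G r Finset.univ c = Finset.univ := by
  have hU : (Finset.univ : Finset V).Nonempty := Finset.univ_nonempty
  rw [splitterRank, dif_pos hU] at hrk
  have hsup : Finset.univ.attach.sup (fun c =>
      (ball G r Finset.univ c.1).attach.inf'
        (Finset.attach_nonempty_iff.2 ⟨c.1, Finset.mem_filter.2 ⟨c.2,
          SimpleGraph.Walk.nil, by simp, by simp [c.2]⟩⟩)
        (fun s => splitterRank G r ((ball G r Finset.univ c.1).erase s.1))) = k := by omega
  obtain ⟨c, -, hceq⟩ := Finset.exists_mem_eq_sup Finset.univ.attach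
    (Finset.attach_nonempty_iff.2 hU) (fun c =>
      (ball G r Finset.univ c.1).attach.inf'
        (Finset.attach_nonempty_iff.2 ⟨c.1, Finset.mem_filter.2 ⟨c.2,
          SimpleGraph.Walk.nil, by simp, by simp [c.2]⟩⟩)
        (fun s => splitterRank G r ((ball G r Finset.univ c.1).erase s.1)))
  rw [hceq] at hsup
  refine ⟨c.1, ?_⟩
  by_contra hne
  set B : Finset V := ball G r Finset.univ c.1 with hB
  have hBne : B.Nonempty := ⟨c.1, self_mem_ball G r _ c.1 (Finset.mem_univ _)⟩
  have hBsub : B ⊂ Finset.univ := Finset.ssubset_univ_iff.2 hne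
  have hle : splitterRank G r B ≤ k := hmin B hBne hBsub
  have hge : k + 1 ≤ splitterRank G r B := by
    rw [splitterRank, dif_pos hBne]
    have hcB : c.1 ∈ B := self_mem_ball G r _ c.1 (Finset.mem_univ _)
    have h1 : k ≤ B.attach.sup (fun c' =>
        (ball G r B c'.1).attach.inf'
          (Finset.attach_nonempty_iff.2 ⟨c'.1, Finset.mem_filter.2 ⟨c'.2,
            SimpleGraph.Walk.nil, by simp, by simp [c'.2]⟩⟩)
          (fun s => splitterRank G r ((ball G r B c'.1).erase s.1))) := by
      refine le_trans ?_ (Finset.le_sup (Finset.mem_attach _ ⟨c.1, hcB⟩))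
      apply Finset.le_inf'
      intro s hs
      obtain ⟨sv, hsv⟩ := s
      have key : ball G r B c.1 = B := ball_ball G r c.1
      show k ≤ splitterRank G r ((ball G r B c.1).erase sv)
      rw [key] at hsv ⊢
      have hsB : sv ∈ B := hsv
      calc k = _ := hsup.symm
        _ ≤ splitterRank G r (B.erase sv) :=
          Finset.inf'_le _ (Finset.mem_attach _
            (⟨sv, hsB⟩ : {x // x ∈ ball G r Finset.univ c.1}))
    omega
  omega
end

section
/- Let r and ℓ be positive integers. If G is a finite nonempty simple graph with rk_r(G) ≤ ℓ, then for every vertex c of G the number of vertices s of G[N_r[c]] that are r-progressing against c is at most (2r+1)^(2^(ℓ-1)-1). -/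
open Classical

namespace SplitterAux

open Finset SimpleGraph

variable {V : Type*} [DecidableEq V] (G : SimpleGraph V) (r : ℕ)

/-- local connector value at `c`. -/
noncomputable def locRank (A : Finset V) (c : V) (hc : c ∈ A) : ℕ :=
  (ball G r A c).attach.inf'
    (Finset.attach_nonempty_iff.2 ⟨c, Finset.mem_filter.2 ⟨hc,
      SimpleGraph.Walk.nil, by simp, by simp [hc]⟩⟩)
    (fun s => splitterRank G r ((ball G r A c).erase s.1))

lemma rank_eq {A : Finset V} (h : A.Nonempty) :
    splitterRank G r A = 1 + A.attach.sup (fun c => locRank G r A c.1 c.2) := by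
  rw [splitterRank, dif_pos h]; rfl

lemma rank_empty : splitterRank G r (∅ : Finset V) = 0 := by
  rw [splitterRank, dif_neg (by simp)]

variable {G r}

lemma ball_subset {A : Finset V} {c : V} : ball G r A c ⊆ A := Finset.filter_subset _ _

lemma mem_ball_self {A : Finset V} {c : V} (hc : c ∈ A) : c ∈ ball G r A c :=
  Finset.mem_filter.2 ⟨hc, SimpleGraph.Walk.nil, by simp, by simp [hc]⟩

lemma ball_mono {A B : Finset V} {c : V} (h : A ⊆ B) : ball G r A c ⊆ ball G r B c := by
  intro x hx
  obtain ⟨hxA, p, hlen, hsupp⟩ := Finset.mem_filter.1 hx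
  exact Finset.mem_filter.2 ⟨h hxA, p, hlen, fun y hy => h (hsupp y hy)⟩

lemma prefix_mem_ball {A : Finset V} {c v x : V} (p : G.Walk c v) (hlen : p.length ≤ r)
    (hsupp : ∀ y ∈ p.support, y ∈ A) (hx : x ∈ p.support) : x ∈ ball G r A c :=
  Finset.mem_filter.2 ⟨hsupp x hx, p.takeUntil x hx,
    le_trans (SimpleGraph.Walk.length_takeUntil_le p hx) hlen,
    fun y hy => hsupp y (SimpleGraph.Walk.support_takeUntil_subset p hx hy)⟩

lemma ball_erase_of_not_mem {A : Finset V} {c v : V} (hv : v ∉ ball G r A c) :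
    ball G r (A.erase v) c = ball G r A c := by
  ext x
  constructor
  · intro hx
    obtain ⟨hxA, p, hlen, hsupp⟩ := Finset.mem_filter.1 hx
    exact Finset.mem_filter.2 ⟨Finset.mem_of_mem_erase hxA, p, hlen,
      fun y hy => Finset.mem_of_mem_erase (hsupp y hy)⟩
  · intro hx
    obtain ⟨hxA, p, hlen, hsupp⟩ := Finset.mem_filter.1 hx
    have hvp : v ∉ p.support := fun hvp => hv (prefix_mem_ball p hlen hsupp hvp)
    refine Finset.mem_filter.2 ⟨Finset.mem_erase.2 ⟨?_, hxA⟩, p, hlen,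
      fun y hy => Finset.mem_erase.2 ⟨fun h => hvp (h ▸ hy), hsupp y hy⟩⟩
    exact fun h => hvp (h ▸ p.end_mem_support)

lemma locRank_le {A : Finset V} {c : V} (hc : c ∈ A) {s : V} (hs : s ∈ ball G r A c) :
    locRank G r A c hc ≤ splitterRank G r ((ball G r A c).erase s) :=
  Finset.inf'_le _ (Finset.mem_attach _ ⟨s, hs⟩)

lemma le_locRank {A : Finset V} {c : V} (hc : c ∈ A) {m : ℕ}
    (hb : ∀ s ∈ ball G r A c, m ≤ splitterRank G r ((ball G r A c).erase s)) :
    m ≤ locRank G r A c hc :=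
  Finset.le_inf' _ _ (fun s _ => hb s.1 s.2)

lemma locRank_le_sup {A : Finset V} {c : V} (hc : c ∈ A) :
    locRank G r A c hc ≤ A.attach.sup (fun c => locRank G r A c.1 c.2) := by
  have h := Finset.le_sup (f := fun c : {x // x ∈ A} => locRank G r A c.1 c.2)
    (Finset.mem_attach _ ⟨c, hc⟩)
  exact h

lemma exists_locRank_eq {A : Finset V} {c : V} (hc : c ∈ A) :
    ∃ t ∈ ball G r A c,
      locRank G r A c hc = splitterRank G r ((ball G r A c).erase t) := by
  unfold locRank
  obtain ⟨t, _, hteq⟩ := Finset.exists_mem_eq_inf'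
    (Finset.attach_nonempty_iff.2 ⟨c, Finset.mem_filter.2 ⟨hc,
      SimpleGraph.Walk.nil, by simp, by simp [hc]⟩⟩)
    (fun s : {x // x ∈ ball G r A c} => splitterRank G r ((ball G r A c).erase s.1))
  exact ⟨t.1, t.2, hteq⟩

lemma le_rank {A : Finset V} {c : V} (hc : c ∈ A) {m : ℕ}
    (hb : ∀ s ∈ ball G r A c, m ≤ splitterRank G r ((ball G r A c).erase s)) :
    m + 1 ≤ splitterRank G r A := by
  rw [rank_eq G r ⟨c, hc⟩]
  have h1 : m ≤ locRank G r A c hc := le_locRank hc hb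
  have h2 := locRank_le_sup (G := G) (r := r) hc
  omega

lemma rank_le {A : Finset V} (h : A.Nonempty) {m : ℕ}
    (hb : ∀ c ∈ A, ∃ s ∈ ball G r A c, splitterRank G r ((ball G r A c).erase s) ≤ m) :
    splitterRank G r A ≤ m + 1 := by
  rw [rank_eq G r h]
  have : A.attach.sup (fun c => locRank G r A c.1 c.2) ≤ m := by
    refine Finset.sup_le ?_
    rintro ⟨c, hcA⟩ -
    obtain ⟨s, hs, hle⟩ := hb c hcA
    exact le_trans (locRank_le hcA hs) hle
  omega

lemma one_le_rank {A : Finset V} (h : A.Nonempty) : 1 ≤ splitterRank G r A := by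
  rw [rank_eq G r h]; omega

lemma exists_opt {A : Finset V} (h : A.Nonempty) :
    ∃ c ∈ A, ∀ s ∈ ball G r A c,
      splitterRank G r A ≤ 1 + splitterRank G r ((ball G r A c).erase s) := by
  obtain ⟨c, _, hceq⟩ := Finset.exists_mem_eq_sup A.attach
    (Finset.attach_nonempty_iff.2 h) (fun c : {x // x ∈ A} => locRank G r A c.1 c.2)
  refine ⟨c.1, c.2, fun s hs => ?_⟩
  rw [rank_eq G r h, hceq]
  exact Nat.add_le_add_left (locRank_le c.2 hs) 1

lemma rank_mono_aux : ∀ (n : ℕ) (A B : Finset V), B.card ≤ n → A ⊆ B →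
    splitterRank G r A ≤ splitterRank G r B := by
  intro n
  induction n with
  | zero =>
    intro A B hB hAB
    have hBe : B = ∅ := Finset.card_eq_zero.1 (Nat.le_zero.1 hB)
    have hAe : A = ∅ := Finset.subset_empty.1 (hBe ▸ hAB)
    rw [hAe, hBe]
  | succ n ih =>
    intro A B hB hAB
    rcases A.eq_empty_or_nonempty with rfl | hA
    · rw [rank_empty]; exact Nat.zero_le _
    have hBne : B.Nonempty := hA.mono hAB
    have h1 : 1 ≤ splitterRank G r B := one_le_rank hBne
    obtain ⟨m, hm⟩ : ∃ m, splitterRank G r B = m + 1 := ⟨splitterRank G r B - 1, by omega⟩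
    rw [hm]
    refine rank_le hA ?_
    intro c hcA
    have hcB : c ∈ B := hAB hcA
    -- optimal reply inside B at connector c
    have hinf : ∃ t ∈ ball G r B c, splitterRank G r ((ball G r B c).erase t) ≤ m := by
      obtain ⟨t, ht, hteq⟩ := exists_locRank_eq (G := G) (r := r) hcB
      refine ⟨t, ht, ?_⟩
      have h2 : 1 + locRank G r B c hcB ≤ splitterRank G r B := by
        rw [rank_eq G r hBne]
        have h5 := locRank_le_sup (G := G) (r := r) hcB
        omega
      omega
    obtain ⟨t, htB, htle⟩ := hinf
    have hcardt : ((ball G r B c).erase t).card ≤ n := by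
      have h4 : (ball G r B c).card ≤ B.card := Finset.card_le_card ball_subset
      have h5 := Finset.card_erase_of_mem htB
      omega
    by_cases htA : t ∈ ball G r A c
    · refine ⟨t, htA, le_trans (ih _ _ hcardt ?_) htle⟩
      exact Finset.erase_subset_erase _ (ball_mono hAB)
    · refine ⟨c, mem_ball_self hcA, le_trans (ih _ _ hcardt ?_) htle⟩
      intro x hx
      have hx1 := Finset.mem_of_mem_erase hx
      exact Finset.mem_erase.2 ⟨fun h => htA (h ▸ hx1), ball_mono hAB hx1⟩

lemma rank_mono {A B : Finset V} (hAB : A ⊆ B) :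
    splitterRank G r A ≤ splitterRank G r B :=
  rank_mono_aux B.card A B le_rfl hAB

lemma rank_le_erase_succ (A : Finset V) (v : V) :
    splitterRank G r A ≤ splitterRank G r (A.erase v) + 1 := by
  rcases A.eq_empty_or_nonempty with rfl | hA
  · rw [rank_empty]; exact Nat.zero_le _
  refine rank_le hA ?_
  intro c hcA
  by_cases hv : v ∈ ball G r A c
  · refine ⟨v, hv, rank_mono ?_⟩
    exact Finset.erase_subset_erase _ ball_subset
  · refine ⟨c, mem_ball_self hcA, rank_mono ?_⟩
    intro x hx
    have hx1 := Finset.mem_of_mem_erase hx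
    exact Finset.mem_erase.2 ⟨fun h => hv (h ▸ hx1), ball_subset hx1⟩

lemma exists_min_witness (B : Finset V) (m : ℕ) (h : m ≤ splitterRank G r B) :
    ∃ W, W ⊆ B ∧ m ≤ splitterRank G r W ∧
      ∀ w ∈ W, splitterRank G r (W.erase w) < m := by
  classical
  set S := B.powerset.filter (fun W => m ≤ splitterRank G r W) with hS
  have hSne : S.Nonempty := ⟨B, by simp [hS, h]⟩
  obtain ⟨W, hWS, hmin⟩ := Finset.exists_min_image S Finset.card hSne
  rw [hS, Finset.mem_filter, Finset.mem_powerset] at hWS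
  refine ⟨W, hWS.1, hWS.2, fun w hw => ?_⟩
  by_contra hcon
  push_neg at hcon
  have hmem : W.erase w ∈ S := by
    rw [hS, Finset.mem_filter, Finset.mem_powerset]
    exact ⟨(Finset.erase_subset _ _).trans hWS.1, hcon⟩
  have h6 := hmin _ hmem
  have h7 : (W.erase w).card < W.card := Finset.card_erase_lt_of_mem hw
  omega

/-- Main lemma: bound on the size of fully critical sets. -/
lemma card_le_of_critical : ∀ (m : ℕ) (X : Finset V),
    splitterRank G r X ≤ m →
    (∀ v ∈ X, splitterRank G r (X.erase v) < splitterRank G r X) →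
    X.card ≤ (2 * r + 1) ^ (2 ^ (m - 1) - 1) := by
  intro m
  induction m with
  | zero =>
    intro X h hcrit
    rcases X.eq_empty_or_nonempty with rfl | hX
    · simp
    · have h1 := one_le_rank (G := G) (r := r) hX
      omega
  | succ m ih =>
    intro X hrank hcrit
    rcases X.eq_empty_or_nonempty with rfl | hX
    · simp
    by_cases hle : splitterRank G r X ≤ m
    · refine le_trans (ih X hle hcrit) (Nat.pow_le_pow_right (by omega) ?_)
      have := Nat.pow_le_pow_right (show 1 ≤ 2 by omega) (show m - 1 ≤ m + 1 - 1 by omega)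
      omega
    have hkX : splitterRank G r X = m + 1 := by omega
    rcases Nat.eq_zero_or_pos m with rfl | hm
    · -- rank X = 1 : X is a singleton
      obtain ⟨v, hv⟩ := hX
      have h0 : splitterRank G r (X.erase v) < 1 := by
        have := hcrit v hv; omega
      have he : X.erase v = ∅ := by
        rcases (X.erase v).eq_empty_or_nonempty with h | h
        · exact h
        · have h1 := one_le_rank (G := G) (r := r) h
          omega
      have hXv : X ⊆ {v} := by
        intro x hx
        by_cases hxv : x = v
        · simp [hxv]
        · exact absurd (he ▸ Finset.mem_erase.2 ⟨hxv, hx⟩) (by simp)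
      have := Finset.card_le_card hXv
      simpa using this
    -- main case : m ≥ 1, rank X = m + 1
    obtain ⟨cs, hcsX, hopt⟩ := exists_opt hX
    -- the optimal ball is everything
    have hball : ball G r X cs = X := by
      refine Finset.Subset.antisymm ball_subset ?_
      intro v hvX
      by_contra hvb
      have hcsv : cs ≠ v := fun h => hvb (h ▸ mem_ball_self hcsX)
      have hcs' : cs ∈ X.erase v := Finset.mem_erase.2 ⟨hcsv, hcsX⟩
      have hbe : ball G r (X.erase v) cs = ball G r X cs := ball_erase_of_not_mem hvb
      have hlow : m + 1 ≤ splitterRank G r (X.erase v) := by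
        refine le_rank hcs' ?_
        rw [hbe]
        intro s hs
        have := hopt s hs
        omega
      have := hcrit v hvX
      omega
    have hlb : ∀ t ∈ X, m ≤ splitterRank G r (X.erase t) := by
      intro t ht
      have h8 := hopt t (by rw [hball]; exact ht)
      rw [hball] at h8
      omega
    -- minimal witnesses
    obtain ⟨W0, hW0sub, hW0rank, hW0crit⟩ :=
      exists_min_witness (X.erase cs) m (hlb cs hcsX)
    have hW0X : ∀ w ∈ W0, w ∈ X := fun w hw => Finset.mem_of_mem_erase (hW0sub hw)
    have hWex : ∀ t : V, ∃ Wt : Finset V, t ∈ W0 →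
        (Wt ⊆ X.erase t ∧ m ≤ splitterRank G r Wt ∧
          ∀ w ∈ Wt, splitterRank G r (Wt.erase w) < m) := by
      intro t
      by_cases ht : t ∈ W0
      · obtain ⟨Wt, h1, h2, h3⟩ := exists_min_witness (X.erase t) m (hlb t (hW0X t ht))
        exact ⟨Wt, fun _ => ⟨h1, h2, h3⟩⟩
      · exact ⟨∅, fun h => absurd h ht⟩
    choose Fw hFw using hWex
    -- choose walk supports
    have hwalkex : ∀ u : V, ∃ s : Finset V, u ∈ X →
        (u ∈ s ∧ cs ∈ s ∧ s.card ≤ r + 1 ∧ (∀ x ∈ s, x ∈ X) ∧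
          ∀ x ∈ s, ∃ q : G.Walk cs x, q.length ≤ r ∧ ∀ y ∈ q.support, y ∈ s) := by
      intro u
      by_cases hu : u ∈ X
      · have hub : u ∈ ball G r X cs := by rw [hball]; exact hu
        obtain ⟨huX, p, hlen, hsupp⟩ := Finset.mem_filter.1 hub
        refine ⟨p.support.toFinset, fun _ => ⟨?_, ?_, ?_, ?_, ?_⟩⟩
        · exact List.mem_toFinset.2 p.end_mem_support
        · exact List.mem_toFinset.2 p.start_mem_support
        · calc p.support.toFinset.card ≤ p.support.length := p.support.toFinset_card_le
            _ = p.length + 1 := p.length_support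
            _ ≤ r + 1 := by omega
        · intro x hx; exact hsupp x (List.mem_toFinset.1 hx)
        · intro x hx
          have hx' : x ∈ p.support := List.mem_toFinset.1 hx
          exact ⟨p.takeUntil x hx',
            le_trans (SimpleGraph.Walk.length_takeUntil_le p hx') hlen,
            fun y hy => List.mem_toFinset.2
              (SimpleGraph.Walk.support_takeUntil_subset p hx' hy)⟩
      · exact ⟨∅, fun h => absurd h hu⟩
    choose Sw hSw using hwalkex
    -- the assembled set U
    set V1 : Finset V := W0 ∪ W0.biUnion Fw with hV1
    set U : Finset V := insert cs (V1.biUnion fun u => (Sw u).erase cs) with hU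
    have hV1X : ∀ u ∈ V1, u ∈ X := by
      intro u hu
      rcases Finset.mem_union.1 hu with h | h
      · exact hW0X u h
      · obtain ⟨t, ht, hut⟩ := Finset.mem_biUnion.1 h
        exact Finset.mem_of_mem_erase ((hFw t ht).1 hut)
    have hUX : ∀ x ∈ U, x ∈ X := by
      intro x hx
      rcases Finset.mem_insert.1 hx with rfl | hx'
      · exact hcsX
      · obtain ⟨u, hu, hxu⟩ := Finset.mem_biUnion.1 hx'
        exact (hSw u (hV1X u hu)).2.2.2.1 x (Finset.mem_of_mem_erase hxu)
    have hcsU : cs ∈ U := Finset.mem_insert_self _ _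
    have hV1U : ∀ u ∈ V1, u ∈ U := by
      intro u hu
      by_cases hcs : u = cs
      · rw [hcs]; exact hcsU
      · exact Finset.mem_insert_of_mem (Finset.mem_biUnion.2
          ⟨u, hu, Finset.mem_erase.2 ⟨hcs, (hSw u (hV1X u hu)).1⟩⟩)
    have hSwU : ∀ u ∈ V1, ∀ y ∈ Sw u, y ∈ U := by
      intro u hu y hy
      by_cases hycs : y = cs
      · rw [hycs]; exact hcsU
      · exact Finset.mem_insert_of_mem (Finset.mem_biUnion.2
          ⟨u, hu, Finset.mem_erase.2 ⟨hycs, hy⟩⟩)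
    have hballU : ball G r U cs = U := by
      refine Finset.Subset.antisymm ball_subset ?_
      intro x hx
      rcases Finset.mem_insert.1 hx with rfl | hx'
      · exact mem_ball_self hcsU
      · obtain ⟨u, hu, hxu⟩ := Finset.mem_biUnion.1 hx'
        obtain ⟨q, hqlen, hqsupp⟩ :=
          (hSw u (hV1X u hu)).2.2.2.2 x (Finset.mem_of_mem_erase hxu)
        exact Finset.mem_filter.2 ⟨hx, q, hqlen, fun y hy => hSwU u hu y (hqsupp y hy)⟩
    -- rank U is large
    have hUrank : m + 1 ≤ splitterRank G r U := by
      refine le_rank hcsU ?_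
      rw [hballU]
      intro s hs
      by_cases hsW0 : s ∈ W0
      · have h1 := hFw s hsW0
        have hsub : Fw s ⊆ U.erase s := by
          intro w hw
          have hwV1 : w ∈ V1 := Finset.mem_union_right _ (Finset.mem_biUnion.2 ⟨s, hsW0, hw⟩)
          exact Finset.mem_erase.2
            ⟨(Finset.mem_erase.1 (h1.1 hw)).1, hV1U w hwV1⟩
        exact le_trans h1.2.1 (rank_mono hsub)
      · have hsub : W0 ⊆ U.erase s := fun w hw =>
          Finset.mem_erase.2 ⟨fun h => hsW0 (h ▸ hw),
            hV1U w (Finset.mem_union_left _ hw)⟩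
        exact le_trans hW0rank (rank_mono hsub)
    -- X ⊆ U by criticality
    have hXU : X ⊆ U := by
      intro v hv
      by_contra hvU
      have hsub : U ⊆ X.erase v := fun x hx =>
        Finset.mem_erase.2 ⟨fun h => hvU (h ▸ hx), hUX x hx⟩
      have h9 := le_trans hUrank (rank_mono hsub)
      have := hcrit v hv
      omega
    -- cardinality bounds
    set T' : ℕ := (2 * r + 1) ^ (2 ^ (m - 1) - 1) with hT'
    have hT1 : 1 ≤ T' := Nat.one_le_pow _ _ (by omega)
    have hsmall : ∀ (W : Finset V), m ≤ splitterRank G r W →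
        (∀ w ∈ W, splitterRank G r (W.erase w) < m) → W.card ≤ T' := by
      intro W h1 h2
      refine ih W ?_ ?_
      · rcases W.eq_empty_or_nonempty with rfl | ⟨w, hw⟩
        · rw [rank_empty]; omega
        · have h3 := rank_le_erase_succ (G := G) (r := r) W w
          have h4 := h2 w hw
          omega
      · intro w hw
        exact lt_of_lt_of_le (h2 w hw) h1
    have hW0card : W0.card ≤ T' := hsmall W0 hW0rank hW0crit
    have hFwcard : ∀ t ∈ W0, (Fw t).card ≤ T' := fun t ht =>
      hsmall (Fw t) (hFw t ht).2.1 (hFw t ht).2.2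
    have hV1card : V1.card ≤ T' + T' * T' := by
      have h2 : (W0.biUnion Fw).card ≤ W0.card * T' := by
        calc (W0.biUnion Fw).card ≤ ∑ t ∈ W0, (Fw t).card := Finset.card_biUnion_le
          _ ≤ ∑ _t ∈ W0, T' := Finset.sum_le_sum hFwcard
          _ = W0.card * T' := by rw [Finset.sum_const, smul_eq_mul]
      have h3 : W0.card * T' ≤ T' * T' := Nat.mul_le_mul_right T' hW0card
      calc V1.card ≤ W0.card + (W0.biUnion Fw).card := Finset.card_union_le _ _
        _ ≤ T' + W0.card * T' := Nat.add_le_add hW0card h2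
        _ ≤ T' + T' * T' := Nat.add_le_add_left h3 T'
    have hUcard : U.card ≤ 1 + (T' + T' * T') * r := by
      have h5 : ∀ u ∈ V1, ((Sw u).erase cs).card ≤ r := by
        intro u hu
        have h := hSw u (hV1X u hu)
        have h6 : (Sw u).card ≤ r + 1 := h.2.2.1
        have h7 := Finset.card_erase_of_mem h.2.1
        omega
      calc U.card ≤ (V1.biUnion fun u => (Sw u).erase cs).card + 1 :=
            Finset.card_insert_le _ _
        _ ≤ (∑ u ∈ V1, ((Sw u).erase cs).card) + 1 :=
            Nat.add_le_add_right Finset.card_biUnion_le 1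
        _ ≤ (∑ _u ∈ V1, r) + 1 := Nat.add_le_add_right (Finset.sum_le_sum h5) 1
        _ = V1.card * r + 1 := by rw [Finset.sum_const, smul_eq_mul]
        _ ≤ (T' + T' * T') * r + 1 := Nat.add_le_add_right
            (Nat.mul_le_mul_right r hV1card) 1
        _ = 1 + (T' + T' * T') * r := Nat.add_comm _ _
    have hXcard : X.card ≤ 1 + (T' + T' * T') * r :=
      le_trans (Finset.card_le_card hXU) hUcard
    -- arithmetic
    have hexp : (2 * r + 1) ^ (2 ^ (m + 1 - 1) - 1) = (2 * r + 1) * (T' * T') := by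
      have h1 : 1 ≤ 2 ^ (m - 1) := Nat.one_le_two_pow
      have h2 : 2 ^ m = 2 ^ (m - 1) * 2 := by
        conv_lhs => rw [show m = (m - 1) + 1 by omega]
        rw [pow_succ]
      have h3 : 2 ^ (m + 1 - 1) - 1 = (2 ^ (m - 1) - 1) + ((2 ^ (m - 1) - 1) + 1) := by
        simp only [Nat.add_sub_cancel]
        omega
      rw [h3, pow_add, pow_add, pow_one, hT']
      ring
    rw [hexp]
    have e2 : T' ≤ T' * T' := Nat.le_mul_of_pos_left _ (by omega)
    have key : 1 + (T' + T' * T') * r ≤ (2 * r + 1) * (T' * T') := by nlinarith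
    exact le_trans hXcard key

end SplitterAux

/-- If `rk_r(G) ≤ ℓ`, then for every Connector move `c` there are at most
`(2r+1)^(2^(ℓ-1)-1)` vertices of `G[N_r[c]]` that are `r`-progressing against `c`. -/
theorem progressing_moves_bound_of_rank_le {V : Type*} [Fintype V] [DecidableEq V] [Nonempty V]
    (G : SimpleGraph V) (r ℓ : ℕ) (hr : 0 < r) (hℓ : 0 < ℓ)
    (hk : splitterRank G r Finset.univ ≤ ℓ) (c : V) :
    ((ball G r Finset.univ c).filter (fun s =>
        splitterRank G r ((ball G r Finset.univ c).erase s) <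
          splitterRank G r (ball G r Finset.univ c))).card
      ≤ (2 * r + 1) ^ (2 ^ (ℓ - 1) - 1) := by
  classical
  set B := ball G r Finset.univ c with hB
  have hBrank : splitterRank G r B ≤ ℓ :=
    le_trans (SplitterAux.rank_mono (Finset.subset_univ B)) hk
  obtain ⟨W, hWB, hWrank, hWcrit⟩ :=
    SplitterAux.exists_min_witness B (splitterRank G r B) le_rfl
  have hWfull : ∀ w ∈ W, splitterRank G r (W.erase w) < splitterRank G r W :=
    fun w hw => lt_of_lt_of_le (hWcrit w hw) hWrank
  have hWle : splitterRank G r W ≤ ℓ := le_trans (SplitterAux.rank_mono hWB) hBrank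
  have hcard := SplitterAux.card_le_of_critical (G := G) (r := r) ℓ W hWle hWfull
  refine le_trans (Finset.card_le_card ?_) hcard
  intro s hs
  obtain ⟨hsB, hslt⟩ := Finset.mem_filter.1 hs
  by_contra hsW
  have hsub : W ⊆ B.erase s := fun w hw =>
    Finset.mem_erase.2 ⟨fun h => hsW (h ▸ hw), hWB hw⟩
  have h1 : splitterRank G r B ≤ splitterRank G r (B.erase s) :=
    le_trans hWrank (SplitterAux.rank_mono hsub)
  omega
end
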